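/- Let (R,m) be a Noetherian local ring and q an m-primary irreducible ideal. Then dim_{R/m} Hom_R(R/m, R/q) = 1. -/
import Mathlib


open IsLocalRing

/-- An ideal `q` is irreducible if whenever `q = J ∩ K` then `q = J` or `q = K`. -/
def IrreducibleIdeal {R : Type*} [CommRing R] (q : Ideal R) : Prop :=
  ∀ J K : Ideal R, q = J ⊓ K → q = J ∨ q = K

/-- Let `(R,m)` be a Noetherian local ring and `q` an `m`-primary irreducible
ideal. Then the socle `Hom_R(R/m, R/q) = (0 :_{R/q} m)` is one-dimensional over `R/m`:
it is nonzero, and every nonzero element of it generates it. -/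
theorem socle_one_dimensional_of_irreducible {R : Type*} [CommRing R] [IsLocalRing R]
    [IsNoetherianRing R] (q : Ideal R) (hq : (q : Ideal R).radical = maximalIdeal R)
    (hirr : IrreducibleIdeal q) :
    Submodule.torsionBySet R (R ⧸ q) ((maximalIdeal R : Ideal R) : Set R) ≠ ⊥ ∧
      ∀ s ∈ Submodule.torsionBySet R (R ⧸ q) ((maximalIdeal R : Ideal R) : Set R), s ≠ 0 →
        ∀ t ∈ Submodule.torsionBySet R (R ⧸ q) ((maximalIdeal R : Ideal R) : Set R),
          ∃ r : R, t = r • s := by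
  have hqne : q ≠ ⊤ := by
    intro h
    have : (q : Ideal R).radical = ⊤ := by rw [h]; exact Ideal.radical_top R
    rw [hq] at this
    exact (IsLocalRing.maximalIdeal.isMaximal R).ne_top this
  -- characterize socle membership via lifts
  have hmem : ∀ a : R, (Ideal.Quotient.mk q a ∈
      Submodule.torsionBySet R (R ⧸ q) ((maximalIdeal R : Ideal R) : Set R)) ↔
      ∀ x ∈ maximalIdeal R, x * a ∈ q := by
    intro a
    rw [Submodule.mem_torsionBySet_iff]
    constructor
    · intro h x hx
      have h2 : Ideal.Quotient.mk q (x * a) = 0 := h ⟨x, hx⟩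
      rwa [Ideal.Quotient.eq_zero_iff_mem] at h2
    · intro h x
      have := h x.1 x.2
      show Ideal.Quotient.mk q ((x : R) * a) = 0
      rwa [Ideal.Quotient.eq_zero_iff_mem]
  constructor
  · -- nonzero
    classical
    have hfg : (maximalIdeal R).FG := IsNoetherian.noetherian _
    obtain ⟨n, hn⟩ := Ideal.exists_pow_le_of_le_radical_of_fg (le_of_eq hq.symm) hfg
    have hex : ∃ n, maximalIdeal R ^ n ≤ q := ⟨n, hn⟩
    set N := Nat.find hex with hN
    have hNle : maximalIdeal R ^ N ≤ q := Nat.find_spec hex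
    have hN0 : N ≠ 0 := by
      intro h
      rw [h, pow_zero, Ideal.one_eq_top, top_le_iff] at hNle
      exact hqne hNle
    have hNlt : ¬ maximalIdeal R ^ (N - 1) ≤ q := Nat.find_min hex (by omega)
    obtain ⟨a, ha, haq⟩ := SetLike.not_le_iff_exists.mp hNlt
    intro hbot
    have hsoc : Ideal.Quotient.mk q a ∈
        Submodule.torsionBySet R (R ⧸ q) ((maximalIdeal R : Ideal R) : Set R) := by
      rw [hmem]
      intro x hx
      have : x * a ∈ maximalIdeal R ^ N := by
        have : maximalIdeal R * maximalIdeal R ^ (N - 1) ≤ maximalIdeal R ^ N := by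
          rw [← pow_succ']
          have : N - 1 + 1 = N := by omega
          rw [this]
        exact this (Ideal.mul_mem_mul hx ha)
      exact hNle this
    rw [hbot, Submodule.mem_bot, Ideal.Quotient.eq_zero_iff_mem] at hsoc
    exact haq hsoc
  · intro s hs hs0 t ht
    obtain ⟨a, rfl⟩ := Ideal.Quotient.mk_surjective s
    obtain ⟨b, rfl⟩ := Ideal.Quotient.mk_surjective t
    by_cases htz : Ideal.Quotient.mk q b = 0
    · exact ⟨0, by rw [htz, zero_smul]⟩
    have haq : a ∉ q := fun h => hs0 (Ideal.Quotient.eq_zero_iff_mem.mpr h)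
    have hbq : b ∉ q := fun h => htz (Ideal.Quotient.eq_zero_iff_mem.mpr h)
    have hsa := (hmem a).mp hs
    have hsb := (hmem b).mp ht
    set J : Ideal R := q ⊔ Ideal.span {a} with hJ
    set K : Ideal R := q ⊔ Ideal.span {b} with hK
    have hne : q ≠ J ⊓ K := by
      intro h
      rcases hirr J K h with h' | h'
      · have : a ∈ J := Ideal.mem_sup_right (Ideal.mem_span_singleton_self a)
        rw [← h'] at this
        exact haq this
      · have : b ∈ K := Ideal.mem_sup_right (Ideal.mem_span_singleton_self b)
        rw [← h'] at this
        exact hbq this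
    have hle : q ≤ J ⊓ K := le_inf le_sup_left le_sup_left
    obtain ⟨c, hcJK, hcq⟩ := SetLike.exists_of_lt (lt_of_le_of_ne hle hne)
    obtain ⟨x, hx, za, hza, hxa⟩ := Submodule.mem_sup.mp hcJK.1
    obtain ⟨y, hy, zb, hzb, hyb⟩ := Submodule.mem_sup.mp hcJK.2
    obtain ⟨r, rfl⟩ := Ideal.mem_span_singleton'.mp hza
    obtain ⟨u, rfl⟩ := Ideal.mem_span_singleton'.mp hzb
    -- r * a ∉ q, so r ∉ m, so r is a unit; similarly u
    have hra : r * a ∉ q := by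
      intro h
      exact hcq (hxa ▸ Ideal.add_mem q hx h)
    have hub : u * b ∉ q := by
      intro h
      exact hcq (hyb ▸ Ideal.add_mem q hy h)
    have hr : IsUnit r := by
      by_contra h
      exact hra (hsa r ((IsLocalRing.mem_maximalIdeal r).mpr h))
    have hu : IsUnit u := by
      by_contra h
      exact hub (hsb u ((IsLocalRing.mem_maximalIdeal u).mpr h))
    obtain ⟨v, hv⟩ := hu.exists_left_inv
    have hdiff : r * a - u * b ∈ q := by
      have heq : x + r * a = y + u * b := hxa.trans hyb.symm
      have : r * a - u * b = y - x := by linear_combination heq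
      rw [this]
      exact q.sub_mem hy hx
    refine ⟨v * r, ?_⟩
    have hsm : (v * r) • Ideal.Quotient.mk q a = Ideal.Quotient.mk q ((v * r) * a) := rfl
    rw [hsm, Ideal.Quotient.eq]
    have key : b - v * r * a = -(v * (r * a - u * b)) := by linear_combination (-b) * hv
    rw [key]
    exact q.neg_mem (q.mul_mem_left v hdiff)
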